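/- Let k ≥ 1 and let [a_i, b_i] for i = 1,…,k be subintervals of [0, m] each of length at least 1. Let Z be the set of linear orders on {1,…,k} realizable by choosing distinct real numbers z_i ∈ [a_i, b_i] and sorting. Then |Z| ≥ k! · ∏_{i=1}^k (b_i − a_i)/m. -/

import Mathlib

open MeasureTheory Set

-- sorting lemma
lemma aux_sort {k : ℕ} (z : Fin k → ℝ) (hz : Function.Injective z) :
    ∃ σ : Equiv.Perm (Fin k), ∀ i j, σ i < σ j ↔ z i < z j := by
  classical
  set τ := Tuple.sort z with hτ
  have hmono : Monotone (z ∘ τ) := Tuple.monotone_sort z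
  have hsm : StrictMono (z ∘ τ) :=
    hmono.strictMono_of_injective (hz.comp τ.injective)
  refine ⟨τ⁻¹, fun i j => ?_⟩
  have := hsm.lt_iff_lt (a := τ⁻¹ i) (b := τ⁻¹ j)
  simpa [Function.comp] using this.symm

-- uniqueness of the permutation
lemma aux_unique {k : ℕ} (σ τ : Equiv.Perm (Fin k))
    (h : ∀ i j, σ i < σ j ↔ τ i < τ j) : σ = τ := by
  have hsm : StrictMono (⇑τ ∘ ⇑σ⁻¹) := by
    intro i j hij
    have : σ (σ⁻¹ i) < σ (σ⁻¹ j) := by simpa using hij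
    simpa using (h _ _).1 this
  have hid : StrictMono (id : Fin k → Fin k) := strictMono_id
  have hr : Set.range (⇑τ ∘ ⇑σ⁻¹) = Set.range (id : Fin k → Fin k) := by
    simp [Set.range_comp, Set.range_eq_univ.2 σ⁻¹.surjective,
      Set.range_eq_univ.2 τ.surjective]
  haveI : WellFoundedLT (Fin k) := inferInstance
  have := (StrictMono.range_inj (f := ⇑τ ∘ ⇑σ⁻¹) (g := id) hsm hid).1 hr
  have h2 : ∀ i, τ i = σ i := by
    intro i
    have := congrFun this (σ i)
    simpa using this
  ext i
  rw [h2 i]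

section Core
variable {k : ℕ}

/-- the order cell of a permutation -/
def aux_cell (σ : Equiv.Perm (Fin k)) : Set (Fin k → ℝ) :=
  {z | ∀ i j, σ i < σ j ↔ z i < z j}

lemma aux_cell_meas (σ : Equiv.Perm (Fin k)) : MeasurableSet (aux_cell σ) := by
  have : aux_cell σ = ⋂ i, ⋂ j, {z : Fin k → ℝ | σ i < σ j ↔ z i < z j} := by
    ext z; simp [aux_cell]
  rw [this]
  refine MeasurableSet.iInter fun i => MeasurableSet.iInter fun j => ?_
  by_cases h : σ i < σ j
  · have : {z : Fin k → ℝ | σ i < σ j ↔ z i < z j} = {z | z i < z j} := by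
      ext z; simp [h]
    rw [this]
    exact measurableSet_lt (measurable_pi_apply i) (measurable_pi_apply j)
  · have : {z : Fin k → ℝ | σ i < σ j ↔ z i < z j} = {z | z j ≤ z i} := by
      ext z
      simp only [Set.mem_setOf_eq, iff_iff_implies_and_implies]
      constructor
      · rintro ⟨-, hz⟩
        by_contra hz'
        exact h (hz (not_le.1 hz'))
      · intro hz
        exact ⟨fun h' => absurd h' h, fun h' => absurd h' (not_lt.2 hz)⟩
    rw [this]
    exact measurableSet_le (measurable_pi_apply j) (measurable_pi_apply i)

lemma aux_cell_disjoint : Pairwise (Function.onFun Disjoint (aux_cell (k := k))) := by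
  intro σ τ hne
  rw [Function.onFun, Set.disjoint_left]
  intro z hzσ hzτ
  exact hne (aux_unique σ τ fun i j => (hzσ i j).trans (hzτ i j).symm)

lemma aux_cell_volume_eq (m : ℝ) (σ : Equiv.Perm (Fin k)) :
    volume (aux_cell σ ∩ Set.pi Set.univ fun _ => Set.Icc (0:ℝ) m) =
    volume (aux_cell (k := k) 1 ∩ Set.pi Set.univ fun _ => Set.Icc (0:ℝ) m) := by
  have hT := MeasureTheory.volume_measurePreserving_piCongrLeft (fun _ : Fin k => ℝ) (σ : Fin k ≃ Fin k)
  have hcoe : ∀ g : Fin k → ℝ, (MeasurableEquiv.piCongrLeft (fun _ : Fin k => ℝ) (σ : Fin k ≃ Fin k)) g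
      = fun b => g (σ.symm b) := by
    intro g
    funext b
    show (Equiv.piCongrLeft (fun _ : Fin k => ℝ) (σ : Fin k ≃ Fin k)) g b = g (σ.symm b)
    have := Equiv.piCongrLeft_apply_apply (fun _ : Fin k => ℝ) (σ : Fin k ≃ Fin k) g (σ.symm b)
    simpa using this
  have hpre : (MeasurableEquiv.piCongrLeft (fun _ : Fin k => ℝ) (σ : Fin k ≃ Fin k)) ⁻¹'
      (aux_cell (k := k) 1 ∩ Set.pi Set.univ fun _ => Set.Icc (0:ℝ) m) =
      aux_cell σ ∩ Set.pi Set.univ fun _ => Set.Icc (0:ℝ) m := by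
    ext g
    simp only [Set.mem_preimage, Set.mem_inter_iff, hcoe g, Set.mem_pi, Set.mem_univ, forall_true_left, aux_cell, Set.mem_setOf_eq]
    constructor
    · rintro ⟨h1, h2⟩
      constructor
      · intro i j
        have := h1 (σ i) (σ j)
        simpa [aux_cell] using this
      · intro i
        have := h2 (σ i)
        simpa using this
    · rintro ⟨h1, h2⟩
      constructor
      · intro i j
        have := h1 (σ.symm i) (σ.symm j)
        simpa [aux_cell] using this
      · intro i
        exact h2 (σ.symm i)
  calc volume (aux_cell σ ∩ Set.pi Set.univ fun _ => Set.Icc (0:ℝ) m)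
      = volume ((MeasurableEquiv.piCongrLeft (fun _ : Fin k => ℝ) (σ : Fin k ≃ Fin k)) ⁻¹'
        (aux_cell (k := k) 1 ∩ Set.pi Set.univ fun _ => Set.Icc (0:ℝ) m)) := by rw [hpre]
    _ = volume (aux_cell (k := k) 1 ∩ Set.pi Set.univ fun _ => Set.Icc (0:ℝ) m) :=
        hT.measure_preimage
          (((aux_cell_meas 1).inter (MeasurableSet.univ_pi fun _ => measurableSet_Icc)).nullMeasurableSet)

lemma aux_null (hk : 1 ≤ k) : volume {z : Fin k → ℝ | ¬ Function.Injective z} = 0 := by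
  have hsub : {z : Fin k → ℝ | ¬ Function.Injective z} ⊆
      ⋃ (i : Fin k), ⋃ (j : Fin k), ⋃ (_ : i ≠ j), {z : Fin k → ℝ | z i = z j} := by
    intro z hz
    simp only [Set.mem_setOf_eq, Function.Injective] at hz
    push_neg at hz
    obtain ⟨i, j, hij, hne⟩ := hz
    exact Set.mem_iUnion.2 ⟨i, Set.mem_iUnion.2 ⟨j, Set.mem_iUnion.2 ⟨hne, hij⟩⟩⟩
  refine le_antisymm (le_trans (measure_mono hsub) ?_) (zero_le)
  refine le_of_eq ?_
  refine measure_iUnion_null fun i => measure_iUnion_null fun j => measure_iUnion_null fun hij => ?_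
  -- hyperplane has measure zero
  set L : (Fin k → ℝ) →ₗ[ℝ] ℝ := (LinearMap.proj i : (Fin k → ℝ) →ₗ[ℝ] ℝ) - (LinearMap.proj j : (Fin k → ℝ) →ₗ[ℝ] ℝ) with hL
  have hker : {z : Fin k → ℝ | z i = z j} = (LinearMap.ker L : Set (Fin k → ℝ)) := by
    ext z
    simp [hL, LinearMap.mem_ker, sub_eq_zero]
  rw [hker]
  refine MeasureTheory.Measure.addHaar_submodule _ _ ?_
  intro htop
  have h1 : Pi.single i (1:ℝ) ∈ LinearMap.ker L := htop ▸ Submodule.mem_top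
  rw [LinearMap.mem_ker] at h1
  simp [hL, Pi.single_apply, hij, Ne.symm hij] at h1

end Core

theorem stmt_0 (k : ℕ) (hk : 1 ≤ k) (m : ℝ) (a b : Fin k → ℝ)
    (ha : ∀ i, 0 ≤ a i) (hb : ∀ i, b i ≤ m) (hlen : ∀ i, 1 ≤ b i - a i) :
    (k.factorial : ℝ) * ∏ i, (b i - a i) / m ≤
      Nat.card {σ : Equiv.Perm (Fin k) //
        ∃ z : Fin k → ℝ, (∀ i, z i ∈ Set.Icc (a i) (b i)) ∧
          Function.Injective z ∧ (∀ i j, σ i < σ j ↔ z i < z j)} := by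
  classical
  set P : Equiv.Perm (Fin k) → Prop := fun σ =>
    ∃ z : Fin k → ℝ, (∀ i, z i ∈ Set.Icc (a i) (b i)) ∧
      Function.Injective z ∧ (∀ i j, σ i < σ j ↔ z i < z j) with hP
  set Zs : Finset (Equiv.Perm (Fin k)) := Finset.univ.filter P with hZs
  -- basic facts
  have i0 : Fin k := ⟨0, hk⟩
  have hm1 : 1 ≤ m := by
    have h1 := hlen i0
    have h2 := ha i0
    have h3 := hb i0
    linarith
  have hm0 : 0 < m := lt_of_lt_of_le one_pos hm1
  set box0 : Set (Fin k → ℝ) := Set.pi Set.univ fun _ => Set.Icc (0:ℝ) m with hbox0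
  set box : Set (Fin k → ℝ) := Set.pi Set.univ fun i => Set.Icc (a i) (b i) with hbox
  set c : ENNReal := volume (aux_cell (k := k) 1 ∩ box0) with hc
  -- Step 2 : k! * c ≤ (ofReal m)^k
  have hmeas : ∀ σ : Equiv.Perm (Fin k), MeasurableSet (aux_cell σ ∩ box0) :=
    fun σ => (aux_cell_meas σ).inter (MeasurableSet.univ_pi fun _ => measurableSet_Icc)
  have step2 : (k.factorial : ENNReal) * c ≤ ENNReal.ofReal m ^ k := by
    have hdisj : Pairwise (Function.onFun Disjoint (fun σ : Equiv.Perm (Fin k) =>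
        aux_cell σ ∩ box0)) := fun σ τ hne =>
      Disjoint.mono Set.inter_subset_left Set.inter_subset_left (aux_cell_disjoint hne)
    have hU : volume (⋃ σ : Equiv.Perm (Fin k), aux_cell σ ∩ box0)
        = ∑' σ : Equiv.Perm (Fin k), volume (aux_cell σ ∩ box0) :=
      measure_iUnion hdisj hmeas
    have hsum : ∑' σ : Equiv.Perm (Fin k), volume (aux_cell σ ∩ box0)
        = (k.factorial : ENNReal) * c := by
      rw [tsum_fintype]
      have : ∀ σ : Equiv.Perm (Fin k), volume (aux_cell σ ∩ box0) = c :=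
        fun σ => aux_cell_volume_eq m σ
      simp only [this, Finset.sum_const, Finset.card_univ, Fintype.card_perm,
        Fintype.card_fin, nsmul_eq_mul]
    have hUle : volume (⋃ σ : Equiv.Perm (Fin k), aux_cell σ ∩ box0) ≤ volume box0 :=
      measure_mono (Set.iUnion_subset fun σ => Set.inter_subset_right)
    have hbox0v : volume box0 = ENNReal.ofReal m ^ k := by
      rw [hbox0, volume_pi_pi]
      simp [Real.volume_Icc]
    calc (k.factorial : ENNReal) * c = volume (⋃ σ : Equiv.Perm (Fin k), aux_cell σ ∩ box0) := by
          rw [hU, hsum]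
      _ ≤ ENNReal.ofReal m ^ k := hbox0v ▸ hUle
  -- Step 3 : ofReal (∏ (b-a)) ≤ Zs.card * c
  have step3 : ENNReal.ofReal (∏ i, (b i - a i)) ≤ (Zs.card : ENNReal) * c := by
    have hboxv : volume box = ENNReal.ofReal (∏ i, (b i - a i)) := by
      rw [hbox, volume_pi_pi]
      simp only [Real.volume_Icc]
      rw [← ENNReal.ofReal_prod_of_nonneg]
      intro i _
      linarith [hlen i]
    have hcover : box ⊆ {z : Fin k → ℝ | ¬ Function.Injective z} ∪
        ⋃ σ ∈ Zs, (aux_cell σ ∩ box0) := by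
      intro z hz
      by_cases hinj : Function.Injective z
      · right
        obtain ⟨σ, hσ⟩ := aux_sort z hinj
        have hzbox : ∀ i, z i ∈ Set.Icc (a i) (b i) := fun i => hz i (Set.mem_univ i)
        have hσZ : σ ∈ Zs := by
          rw [hZs, Finset.mem_filter]
          exact ⟨Finset.mem_univ _, z, hzbox, hinj, hσ⟩
        refine Set.mem_biUnion hσZ ⟨hσ, ?_⟩
        intro i _
        exact ⟨le_trans (ha i) (hzbox i).1, le_trans (hzbox i).2 (hb i)⟩
      · left
        exact hinj
    calc ENNReal.ofReal (∏ i, (b i - a i)) = volume box := hboxv.symm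
      _ ≤ volume ({z : Fin k → ℝ | ¬ Function.Injective z} ∪ ⋃ σ ∈ Zs, (aux_cell σ ∩ box0)) :=
          measure_mono hcover
      _ ≤ volume {z : Fin k → ℝ | ¬ Function.Injective z}
            + volume (⋃ σ ∈ Zs, (aux_cell σ ∩ box0)) := measure_union_le _ _
      _ = volume (⋃ σ ∈ Zs, (aux_cell σ ∩ box0)) := by rw [aux_null hk, zero_add]
      _ ≤ ∑ σ ∈ Zs, volume (aux_cell σ ∩ box0) := measure_biUnion_finset_le _ _
      _ = (Zs.card : ENNReal) * c := by
          have : ∀ σ ∈ Zs, volume (aux_cell σ ∩ box0) = c := fun σ _ => aux_cell_volume_eq m σ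
          rw [Finset.sum_congr rfl this]
          simp [mul_comm]
  -- combine in ENNReal
  have combined : ENNReal.ofReal ((k.factorial : ℝ) * ∏ i, (b i - a i)) ≤
      ENNReal.ofReal ((Zs.card : ℝ) * m ^ k) := by
    have h1 : ENNReal.ofReal ((k.factorial : ℝ) * ∏ i, (b i - a i))
        = (k.factorial : ENNReal) * ENNReal.ofReal (∏ i, (b i - a i)) := by
      rw [ENNReal.ofReal_mul (by positivity)]
      simp
    have h2 : ENNReal.ofReal ((Zs.card : ℝ) * m ^ k)
        = (Zs.card : ENNReal) * ENNReal.ofReal m ^ k := by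
      rw [ENNReal.ofReal_mul (by positivity), ENNReal.ofReal_pow (le_of_lt hm0)]
      simp
    rw [h1, h2]
    calc (k.factorial : ENNReal) * ENNReal.ofReal (∏ i, (b i - a i))
        ≤ (k.factorial : ENNReal) * ((Zs.card : ENNReal) * c) := by
          exact mul_le_mul_right step3 _
      _ = (Zs.card : ENNReal) * ((k.factorial : ENNReal) * c) := by ring
      _ ≤ (Zs.card : ENNReal) * ENNReal.ofReal m ^ k := mul_le_mul_right step2 _
  -- to reals
  have realineq : (k.factorial : ℝ) * ∏ i, (b i - a i) ≤ (Zs.card : ℝ) * m ^ k := by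
    have := (ENNReal.ofReal_le_ofReal_iff (by positivity)).1 combined
    exact this
  -- card identification
  have hcard : (Nat.card {σ : Equiv.Perm (Fin k) // P σ} : ℝ) = (Zs.card : ℝ) := by
    rw [Nat.card_eq_fintype_card, Fintype.card_subtype]
  -- finish
  have hprod : ∏ i, (b i - a i) / m = (∏ i, (b i - a i)) / m ^ k := by
    rw [Finset.prod_div_distrib]
    simp
  rw [hP] at *
  calc (k.factorial : ℝ) * ∏ i, (b i - a i) / m
      = (k.factorial : ℝ) * (∏ i, (b i - a i)) / m ^ k := by rw [hprod]; ring
    _ ≤ (Zs.card : ℝ) := by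
        rw [div_le_iff₀ (by positivity)]
        exact realineq
    _ = _ := hcard.symm
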